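/- Let A be the adjacency matrix of a simple undirected graph G on n vertices, let 3 ≤ k ≤ n, let m ∈ ℕ^k with m_i ≥ 1 for all i and Σ_{i=1}^k m_i = n, and let 1 ≤ r ≤ k−2. If min over all partition matrices X ∈ P_m of (1/2)⟨A, X B_{r,k} Xᵀ⟩ is strictly positive (equivalently, min over all n×n permutation matrices P of (1/2)⟨Pᵀ A P, X̄ B_{r,k} X̄ᵀ⟩ > 0), then bdw(A) > min{ m_2 + … + m_{r+1}, m_3 + … + m_{r+2}, …, m_{k−r} + … + m_{k−1} }. -/
import Mathlib


open Matrix Finset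

attribute [local instance] Classical.propDecidable

noncomputable section

/-- Trace inner product `⟨A,B⟩ = trace(Aᵀ B)`. -/
def traceInner {n : ℕ} (A B : Matrix (Fin n) (Fin n) ℝ) : ℝ :=
  Matrix.trace (Aᵀ * B)

/-- `A` is the adjacency matrix of a simple undirected graph:
symmetric 0–1 matrix with zero diagonal. -/
def IsAdjacency {n : ℕ} (A : Matrix (Fin n) (Fin n) ℝ) : Prop :=
  (∀ i j, A i j = 0 ∨ A i j = 1) ∧ (∀ i j, A i j = A j i) ∧ ∀ i, A i i = 0

/-- Bandwidth of the graph with adjacency matrix `A` under the labeling `φ`. -/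
def bdwLabel {n : ℕ} (A : Matrix (Fin n) (Fin n) ℝ) (φ : Equiv.Perm (Fin n)) : ℕ :=
  Finset.sup Finset.univ fun p : Fin n × Fin n =>
    if A p.1 p.2 ≠ 0 then (((φ p.1 : ℕ) : ℤ) - ((φ p.2 : ℕ) : ℤ)).natAbs else 0

/-- Bandwidth of the graph with adjacency matrix `A`:
minimum over all labelings. -/
def bdw {n : ℕ} (A : Matrix (Fin n) (Fin n) ℝ) : ℕ :=
  ⨅ φ : Equiv.Perm (Fin n), bdwLabel A φ

/-- `n × k` partition matrices for block sizes `m 0, …, m (k-1)`. -/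
def IsPartitionMatrix (n k : ℕ) (m : ℕ → ℕ) (X : Matrix (Fin n) (Fin k) ℝ) : Prop :=
  (∀ i j, X i j = 0 ∨ X i j = 1) ∧ (∀ i, ∑ j, X i j = 1) ∧
  ∀ j : Fin k, ∑ i, X i j = (m (j : ℕ) : ℝ)

/-- The matrix `B_{r,k}`, with `(B_{r,k})_{uv} = 1` iff `|u - v| > r`. -/
def Bmat (k r : ℕ) : Matrix (Fin k) (Fin k) ℝ :=
  Matrix.of fun u v : Fin k =>
    if (r : ℤ) < |((u : ℕ) : ℤ) - ((v : ℕ) : ℤ)| then 1 else 0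

/-- The basic partition matrix `X̄`: the first `m 0` vertices in block `0`,
the next `m 1` vertices in block `1`, and so on. -/
def basicPartition (n k : ℕ) (m : ℕ → ℕ) : Matrix (Fin n) (Fin k) ℝ :=
  Matrix.of fun (i : Fin n) (j : Fin k) =>
    if (∑ l ∈ Finset.range (j : ℕ), m l) ≤ (i : ℕ) ∧
        (i : ℕ) < ∑ l ∈ Finset.range ((j : ℕ) + 1), m l then 1 else 0

/-- Permutation matrix of a permutation `σ`. -/
def permMatrix {n : ℕ} (σ : Equiv.Perm (Fin n)) : Matrix (Fin n) (Fin n) ℝ :=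
  Matrix.of fun i j => if σ i = j then 1 else 0

/-- Theorem 1 of the paper: if the minimum of
`(1/2)⟨A, X B_{r,k} Xᵀ⟩` over all partition matrices `X ∈ P_m` is strictly
positive, then `bdw(A) > min{ m_2 + ⋯ + m_{r+1}, …, m_{k-r} + ⋯ + m_{k-1} }`
(written here with 0-indexed block sizes `m 0, …, m (k-1)`). -/
theorem bandwidth_lower_bound_of_minPart_pos
    (n k r : ℕ) (m : ℕ → ℕ) (A : Matrix (Fin n) (Fin n) ℝ)
    (hA : IsAdjacency A) (hk3 : 3 ≤ k) (hkn : k ≤ n)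
    (hm : ∀ i < k, 1 ≤ m i) (hsum : ∑ i ∈ Finset.range k, m i = n)
    (hr1 : 1 ≤ r) (hrk : r ≤ k - 2)
    (hpos : ∀ X : Matrix (Fin n) (Fin k) ℝ, IsPartitionMatrix n k m X →
      0 < (1 / 2 : ℝ) * traceInner A (X * Bmat k r * Xᵀ)) :
    sInf {s : ℕ | ∃ t, 1 ≤ t ∧ t ≤ k - r - 1 ∧ s = ∑ l ∈ Finset.Ico t (t + r), m l} <
      bdw A := by
  by_contra hcon
  push_neg at hcon
  set b := sInf {s : ℕ | ∃ t, 1 ≤ t ∧ t ≤ k - r - 1 ∧ s = ∑ l ∈ Finset.Ico t (t + r), m l}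
    with hb_def
  obtain ⟨φ, hφ⟩ : ∃ φ : Equiv.Perm (Fin n), bdwLabel A φ = bdw A := by
    have h1 : bdw A ∈ Set.range (fun φ : Equiv.Perm (Fin n) => bdwLabel A φ) :=
      Nat.sInf_mem (Set.range_nonempty _)
    exact h1
  have hφb : bdwLabel A φ ≤ b := by rw [hφ]; exact hcon
  set S : ℕ → ℕ := fun j => ∑ l ∈ Finset.range j, m l with hS_def
  have hSmono : ∀ {a c : ℕ}, a ≤ c → S a ≤ S c := by
    intro a c h
    exact Finset.sum_le_sum_of_subset (Finset.range_subset_range.mpr h)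
  have hSn : S k = n := hsum
  set X : Matrix (Fin n) (Fin k) ℝ := Matrix.of fun (i : Fin n) (j : Fin k) =>
    if S (j : ℕ) ≤ ((φ i : Fin n) : ℕ) ∧ ((φ i : Fin n) : ℕ) < S ((j : ℕ) + 1) then 1 else 0
    with hX_def
  have hXval : ∀ (i : Fin n) (j : Fin k),
      X i j = if S (j:ℕ) ≤ ((φ i : Fin n) : ℕ) ∧ ((φ i : Fin n) : ℕ) < S ((j:ℕ)+1)
        then (1:ℝ) else 0 := fun i j => rfl
  -- entries 0/1
  have hent : ∀ i j, X i j = 0 ∨ X i j = 1 := by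
    intro i j
    rw [hXval]
    by_cases h : S (j:ℕ) ≤ ((φ i : Fin n) : ℕ) ∧ ((φ i : Fin n) : ℕ) < S ((j:ℕ)+1)
    · right; exact if_pos h
    · left; exact if_neg h
  -- row sums
  have hrow : ∀ i, ∑ j, X i j = 1 := by
    intro i
    have hx : ((φ i : Fin n) : ℕ) < S k := by rw [hSn]; exact (φ i).isLt
    set x := ((φ i : Fin n) : ℕ) with hx_def
    have h1 : ∑ j : Fin k, X i j
        = ∑ j ∈ Finset.range k, (if S j ≤ x ∧ x < S (j+1) then (1:ℝ) else 0) :=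
      Fin.sum_univ_eq_sum_range (fun j => if S j ≤ x ∧ x < S (j+1) then (1:ℝ) else 0) k
    rw [h1]
    have hterm : ∀ j ∈ Finset.range k,
        (if S j ≤ x ∧ x < S (j+1) then (1:ℝ) else 0)
          = (fun j => if S j ≤ x then (1:ℝ) else 0) j
            - (fun j => if S j ≤ x then (1:ℝ) else 0) (j+1) := by
      intro j _
      have hst : S j ≤ S (j+1) := hSmono (Nat.le_succ j)
      by_cases h2 : S (j+1) ≤ x
      · have hle : S j ≤ x := le_trans hst h2
        simp only
        rw [if_neg (fun h => absurd h.2 (not_lt.mpr h2)), if_pos hle, if_pos h2]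
        norm_num
      · by_cases hle : S j ≤ x
        · simp only
          rw [if_pos ⟨hle, not_le.mp h2⟩, if_pos hle, if_neg h2]
          norm_num
        · simp only
          rw [if_neg (fun h => hle h.1), if_neg hle, if_neg h2]
          norm_num
    rw [Finset.sum_congr rfl hterm,
      Finset.sum_range_sub' (fun j => if S j ≤ x then (1:ℝ) else 0) k]
    have hS0 : S 0 = 0 := Finset.sum_range_zero m
    show (if S 0 ≤ x then (1:ℝ) else 0) - (if S k ≤ x then (1:ℝ) else 0) = 1
    rw [if_pos (hS0 ▸ Nat.zero_le x), if_neg (not_le.mpr hx)]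
    norm_num
  -- column sums
  have hcol : ∀ j : Fin k, ∑ i, X i j = (m (j:ℕ) : ℝ) := by
    intro j
    have h1 : ∑ i : Fin n, X i j
        = ∑ p : Fin n, (if S (j:ℕ) ≤ (p:ℕ) ∧ (p:ℕ) < S ((j:ℕ)+1) then (1:ℝ) else 0) :=
      Equiv.sum_comp φ (fun p : Fin n => if S (j:ℕ) ≤ (p:ℕ) ∧ (p:ℕ) < S ((j:ℕ)+1)
        then (1:ℝ) else 0)
    rw [h1, Fin.sum_univ_eq_sum_range
      (fun p => if S (j:ℕ) ≤ p ∧ p < S ((j:ℕ)+1) then (1:ℝ) else 0) n]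
    have hle : S ((j:ℕ)+1) ≤ n := by rw [← hSn]; exact hSmono j.isLt
    have hfil : (Finset.range n).filter (fun p => S (j:ℕ) ≤ p ∧ p < S ((j:ℕ)+1))
        = Finset.Ico (S (j:ℕ)) (S ((j:ℕ)+1)) := by
      ext p
      simp only [Finset.mem_filter, Finset.mem_range, Finset.mem_Ico]
      omega
    rw [Finset.sum_boole, hfil, Nat.card_Ico]
    have hsucc : S ((j:ℕ)+1) = S (j:ℕ) + m (j:ℕ) := Finset.sum_range_succ m (j:ℕ)
    rw [hsucc]
    simp
  have hX : IsPartitionMatrix n k m X := ⟨hent, hrow, hcol⟩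
  -- key arithmetic lemma
  have aux : ∀ (u v : Fin k) (x y : ℕ), (v:ℕ) + r < (u:ℕ) → S (u:ℕ) ≤ x →
      y < S ((v:ℕ)+1) → b + y < x := by
    intro u v x y huv hx hy
    have hu : (u:ℕ) < k := u.isLt
    have h1 : 1 ≤ (v:ℕ)+1 := Nat.le_add_left 1 _
    have h2 : (v:ℕ)+1 ≤ k - r - 1 := by omega
    have hT : b ≤ ∑ l ∈ Finset.Ico ((v:ℕ)+1) ((v:ℕ)+1+r), m l := by
      rw [hb_def]
      exact Nat.sInf_le ⟨(v:ℕ)+1, h1, h2, rfl⟩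
    have hsplit : S ((v:ℕ)+1) + ∑ l ∈ Finset.Ico ((v:ℕ)+1) ((v:ℕ)+1+r), m l
        = S ((v:ℕ)+1+r) := Finset.sum_range_add_sum_Ico m (Nat.le_add_right _ _)
    have hmono2 : S ((v:ℕ)+1+r) ≤ S (u:ℕ) := hSmono (by omega)
    omega
  -- the edge bound
  have hedge : ∀ p q : Fin n, A p q ≠ 0 →
      ((((φ p : Fin n) : ℕ) : ℤ) - (((φ q : Fin n) : ℕ) : ℤ)).natAbs ≤ b := by
    intro p q h
    have h1 : (if A p q ≠ 0 then ((((φ p : Fin n) : ℕ) : ℤ)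
        - (((φ q : Fin n) : ℕ) : ℤ)).natAbs else 0) ≤ bdwLabel A φ :=
      Finset.le_sup (f := fun pr : Fin n × Fin n => if A pr.1 pr.2 ≠ 0 then
        (((φ pr.1 : ℕ) : ℤ) - ((φ pr.2 : ℕ) : ℤ)).natAbs else 0) (Finset.mem_univ (p,q))
    rw [if_pos h] at h1
    exact le_trans h1 hφb
  -- the trace is zero
  have hzero : traceInner A (X * Bmat k r * Xᵀ) = 0 := by
    unfold traceInner
    rw [Matrix.trace]
    apply Finset.sum_eq_zero
    intro i _
    rw [Matrix.diag_apply, Matrix.mul_apply]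
    apply Finset.sum_eq_zero
    intro q _
    rw [Matrix.transpose_apply]
    by_cases hA0 : A q i = 0
    · rw [hA0, zero_mul]
    · have hM : (X * Bmat k r * Xᵀ) q i = 0 := by
        rw [Matrix.mul_apply]
        apply Finset.sum_eq_zero
        intro v _
        rw [Matrix.mul_apply, Matrix.transpose_apply, Finset.sum_mul]
        apply Finset.sum_eq_zero
        intro u _
        by_cases h1 : S (u:ℕ) ≤ ((φ q : Fin n) : ℕ) ∧ ((φ q : Fin n) : ℕ) < S ((u:ℕ)+1)
        · by_cases h2 : S (v:ℕ) ≤ ((φ i : Fin n) : ℕ) ∧ ((φ i : Fin n) : ℕ) < S ((v:ℕ)+1)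
          · have hB : Bmat k r u v = 0 := by
              show (if (r : ℤ) < |((u : ℕ) : ℤ) - ((v : ℕ) : ℤ)| then (1:ℝ) else 0) = 0
              rw [if_neg]
              intro habs
              have hcases : ((r:ℤ) < ((u:ℕ):ℤ) - ((v:ℕ):ℤ))
                  ∨ ((r:ℤ) < ((v:ℕ):ℤ) - ((u:ℕ):ℤ)) := by
                rcases lt_abs.mp habs with h | h
                · exact Or.inl h
                · right; omega
              have hedgeb := hedge q i hA0
              rcases hcases with h | h
              · have huv : (v:ℕ) + r < (u:ℕ) := by omega
                have := aux u v ((φ q : Fin n) : ℕ) ((φ i : Fin n) : ℕ) huv h1.1 h2.2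
                omega
              · have huv : (u:ℕ) + r < (v:ℕ) := by omega
                have := aux v u ((φ i : Fin n) : ℕ) ((φ q : Fin n) : ℕ) huv h2.1 h1.2
                omega
            rw [hB, mul_zero, zero_mul]
          · have hXiv : X i v = 0 := by rw [hXval]; exact if_neg h2
            rw [hXiv, mul_zero]
        · have hXqu : X q u = 0 := by rw [hXval]; exact if_neg h1
          rw [hXqu, zero_mul, zero_mul]
      rw [hM, mul_zero]
  have hp := hpos X hX
  rw [hzero] at hp
  norm_num at hp

end
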